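/- arXiv:2112.14079 — 5 statements merged into one kernel-verified Lean document; each statement's English description precedes it below -/
import Mathlib

section
/- Let A be finite and X ⊆ A^(ℤ×ℤ) a one-step SFT given by relations H, V. If X contains a configuration x that is horizontally periodic, i.e., x(i+m, j) = x(i,j) for all i,j with some m ≥ 1, then X contains a configuration y that is doubly periodic: there exist m' ≥ 1 and n' ≥ 1 with y(i+m', j) = y(i,j) and y(i, j+n') = y(i,j) for all i,j. -/
/-- If a one-step two-dimensional SFT `X_{(H,V)}` contains a horizontally
periodic configuration, then it contains a doubly periodic configuration. -/
theorem stmt_5 (A : Type) [Fintype A]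
    (H V : A → A → Prop)
    (X : Set (ℤ × ℤ → A))
    (hX : X = {x | ∀ i j : ℤ, H (x (i, j)) (x (i + 1, j)) ∧ V (x (i, j)) (x (i, j + 1))})
    (x : ℤ × ℤ → A) (hx : x ∈ X)
    (m : ℤ) (hm : 1 ≤ m)
    (hper : ∀ i j : ℤ, x (i + m, j) = x (i, j)) :
    ∃ y ∈ X, ∃ m' n' : ℤ, 1 ≤ m' ∧ 1 ≤ n' ∧
      (∀ i j : ℤ, y (i + m', j) = y (i, j)) ∧
      (∀ i j : ℤ, y (i, j + n') = y (i, j)) := by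
  subst hX
  have hm0 : (0:ℤ) < m := by omega
  -- periodicity for all multiples of m
  have hmul : ∀ k : ℤ, ∀ i j : ℤ, x (i + k * m, j) = x (i, j) := by
    intro k
    induction k using Int.induction_on with
    | zero => simp
    | succ k ih =>
      intro i j
      have h1 : i + (k + 1 : ℤ) * m = (i + k * m) + m := by ring
      rw [h1, hper, ih]
    | pred k ih =>
      intro i j
      have h1 : i + (-(k:ℤ) - 1) * m + m = i + (-(k:ℤ)) * m := by ring
      have := hper (i + (-(k:ℤ) - 1) * m) j
      rw [h1] at this
      rw [← ih i j, ← this]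
  have hmod : ∀ i j : ℤ, x (i, j) = x (i % m, j) := by
    intro i j
    have h1 : i = i % m + (i / m) * m := by
      rw [Int.emod_add_ediv_mul]
    conv_lhs => rw [h1]
    exact hmul (i / m) (i % m) j
  -- pigeonhole on rows
  set N := m.toNat with hN
  obtain ⟨a, b, hab, hfab⟩ :=
    Finite.exists_ne_map_eq_of_infinite (fun (j : ℤ) (i : Fin N) => x ((i : ℤ), j))
  -- wlog a < b
  obtain ⟨j1, j2, hj12, hrowfin⟩ :
      ∃ j1 j2 : ℤ, j1 < j2 ∧
        (fun (i : Fin N) => x ((i : ℤ), j1)) = (fun (i : Fin N) => x ((i : ℤ), j2)) := by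
    rcases lt_or_gt_of_ne hab with h | h
    · exact ⟨a, b, h, hfab⟩
    · exact ⟨b, a, h, hfab.symm⟩
  -- full row equality
  have hrow : ∀ i : ℤ, x (i, j1) = x (i, j2) := by
    intro i
    have hr0 : 0 ≤ i % m := Int.emod_nonneg i (by omega)
    have hr1 : i % m < m := Int.emod_lt_of_pos i hm0
    have hlt : (i % m).toNat < N := by
      rw [hN]; omega
    have key := congrFun hrowfin ⟨(i % m).toNat, hlt⟩
    simp only [Int.toNat_of_nonneg hr0] at key
    rw [hmod i j1, hmod i j2]
    exact key
  set n : ℤ := j2 - j1 with hn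
  have hn0 : (0:ℤ) < n := by omega
  refine ⟨fun p => x (p.1, j1 + (p.2 - j1) % n), ?_, m, n, hm, by omega, ?_, ?_⟩
  · intro i j
    set r := (j - j1) % n with hr
    have hr0 : 0 ≤ r := Int.emod_nonneg _ (by omega)
    have hr1 : r < n := Int.emod_lt_of_pos _ hn0
    constructor
    · exact (hx i (j1 + r)).1
    · have hsucc : (j + 1 - j1) % n = (r + 1) % n := by
        have hed := Int.emod_add_mul_ediv (j - j1) n
        have h2 : j + 1 - j1 = (r + 1) + n * ((j - j1) / n) := by
          rw [hr]; linarith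
        rw [h2, Int.add_mul_emod_self_left]
      rcases eq_or_lt_of_le (by omega : r + 1 ≤ n) with heq | hlt
      · -- wrap around
        have h0 : (r + 1) % n = 0 := by rw [heq, Int.emod_self]
        simp only [hsucc, h0]
        have h1 : j1 + r = j2 - 1 := by omega
        have hV := (hx i (j2 - 1)).2
        rw [show j2 - 1 + 1 = j2 by ring] at hV
        rw [h1, add_zero, hrow i]
        exact hV
      · have h0 : (r + 1) % n = r + 1 := Int.emod_eq_of_lt (by omega) hlt
        simp only [hsucc, h0]
        have hV := (hx i (j1 + r)).2
        rw [show j1 + r + 1 = j1 + (r + 1) by ring] at hV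
        exact hV
  · intro i j
    simp only
    rw [hper]
  · intro i j
    simp only
    congr 2
    rw [show j + n - j1 = (j - j1) + n * 1 by ring, Int.add_mul_emod_self_left]
end

section
/- Let A be finite and X ⊆ A^(ℤ×ℤ) a one-step SFT given by relations H, V. If X contains a configuration periodic with period vector (m,n) where m ≠ 0 and n ≠ 0, then X contains a horizontally periodic configuration (invariant under σ_{(k,0)} for some k ≥ 1) and also a vertically periodic configuration. -/
private lemma auxper {A : Type} (x : ℤ × ℤ → A) (m n : ℤ)
    (hper : ∀ v : ℤ × ℤ, x (v + (m, n)) = x v) :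
    ∀ (k i j : ℤ), x (i + k * m, j + k * n) = x (i, j) := by
  have h1 : ∀ i j : ℤ, x (i + m, j + n) = x (i, j) := fun i j => hper (i, j)
  intro k
  induction k using Int.induction_on with
  | zero => intro i j; norm_num
  | succ k ih =>
      intro i j
      have h2 := h1 (i + (k : ℤ) * m) (j + (k : ℤ) * n)
      rw [ih] at h2
      have h4 : ((i + ((k : ℤ) + 1) * m, j + ((k : ℤ) + 1) * n) : ℤ × ℤ)
          = (i + (k : ℤ) * m + m, j + (k : ℤ) * n + n) := by
        rw [Prod.mk.injEq]; constructor <;> ring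
      rw [h4]; exact h2
  | pred k ih =>
      intro i j
      have h2 := h1 (i + (-(k : ℤ) - 1) * m) (j + (-(k : ℤ) - 1) * n)
      have h3 : ((i + (-(k : ℤ) - 1) * m + m, j + (-(k : ℤ) - 1) * n + n) : ℤ × ℤ)
          = (i + (-(k : ℤ)) * m, j + (-(k : ℤ)) * n) := by
        rw [Prod.mk.injEq]; constructor <;> ring
      rw [h3, ih] at h2
      exact h2.symm

private lemma aux1 {A : Type} [Fintype A] (H V : A → A → Prop)
    (x : ℤ × ℤ → A)
    (hx : ∀ i j : ℤ, H (x (i, j)) (x (i + 1, j)) ∧ V (x (i, j)) (x (i, j + 1)))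
    (m n : ℤ) (hm : 1 ≤ m) (hn : 1 ≤ n)
    (hper : ∀ v : ℤ × ℤ, x (v + (m, n)) = x v) :
    ∃ y : ℤ × ℤ → A,
      (∀ i j : ℤ, H (y (i, j)) (y (i + 1, j)) ∧ V (y (i, j)) (y (i, j + 1))) ∧
      ∃ k1 : ℤ, 1 ≤ k1 ∧ (∀ i j : ℤ, y (i + k1, j) = y (i, j)) ∧
      ∃ k2 : ℤ, 1 ≤ k2 ∧ (∀ i j : ℤ, y (i, j + k2) = y (i, j)) := by
  have hperk := auxper x m n hper
  have hn0 : n ≠ 0 := by omega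
  have hn' : (0 : ℤ) < n := by omega
  -- pigeonhole on strips of width m+1, height n
  obtain ⟨s, t, hst, hG⟩ :
      ∃ s t : ℤ, s < t ∧
        (fun (u : ℤ) (a : Fin (m.toNat + 1)) (b : Fin n.toNat) =>
          x (u - m + ((a : ℕ) : ℤ), ((b : ℕ) : ℤ))) s =
        (fun (u : ℤ) (a : Fin (m.toNat + 1)) (b : Fin n.toNat) =>
          x (u - m + ((a : ℕ) : ℤ), ((b : ℕ) : ℤ))) t := by
    obtain ⟨t1, t2, hne, hGG⟩ := Finite.exists_ne_map_eq_of_infinite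
      (fun (u : ℤ) (a : Fin (m.toNat + 1)) (b : Fin n.toNat) =>
        x (u - m + ((a : ℕ) : ℤ), ((b : ℕ) : ℤ)))
    rcases hne.lt_or_gt with h | h
    · exact ⟨t1, t2, h, hGG⟩
    · exact ⟨t2, t1, h, hGG.symm⟩
  set p : ℤ := t - s with hpdef
  have hp : 0 < p := by omega
  have key : ∀ a b : ℤ, s - m ≤ a → a ≤ s → 0 ≤ b → b < n → x (a, b) = x (a + p, b) := by
    intro a b ha1 ha2 hb1 hb2
    have hA2 : (a - s + m).toNat < m.toNat + 1 := by omega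
    have hB2 : b.toNat < n.toNat := by omega
    have h := congrFun (congrFun hG ⟨(a - s + m).toNat, hA2⟩) ⟨b.toNat, hB2⟩
    simp only [Fin.val_mk] at h
    rw [Int.toNat_of_nonneg (show (0:ℤ) ≤ a - s + m by omega),
        Int.toNat_of_nonneg hb1] at h
    rw [show s - m + (a - s + m) = a from by ring,
        show t - m + (a - s + m) = a + p from by rw [hpdef]; ring] at h
    exact h
  have hdvd : ∀ u : ℤ, p ∣ (s + (u - s) % p - u) := by
    intro u
    exact ⟨-((u - s) / p), by rw [Int.emod_def]; ring⟩
  -- splice-chain lemma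
  have chain : ∀ (q : ℕ) (a : ℤ), s - m ≤ a → a + (q : ℤ) * p < s + p →
      x (a, 0) = x (a + (q : ℤ) * p, 0) := by
    intro q
    induction q with
    | zero => intro a _ _; norm_num
    | succ q ih =>
      intro a ha1 ha2
      have hq0 : (0:ℤ) ≤ (q : ℤ) * p := mul_nonneg (by positivity) hp.le
      have hlt : a + (q : ℤ) * p < s := by push_cast at ha2; linarith
      have step1 : x (a, 0) = x (a + p, 0) := key a 0 ha1 (by linarith) le_rfl hn'
      have step2 : x (a + p, 0) = x (a + p + (q : ℤ) * p, 0) :=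
        ih (a + p) (by linarith) (by push_cast at ha2 ⊢; linarith)
      rw [step1, step2, show a + p + (q : ℤ) * p = a + ((q : ℕ) + 1 : ℤ) * p from by ring,
          show (((q : ℕ) + 1 : ℤ)) = (((q + 1 : ℕ) : ℤ)) from by push_cast; ring]
  -- wrap lemma
  have wrap : ∀ u : ℤ, x (s + (u - s) % p - m, 0) = x (s + (u - m - s) % p, 0) := by
    intro u
    have h1 : 0 ≤ (u - s) % p := Int.emod_nonneg _ (by omega)
    have h2 : (u - s) % p < p := Int.emod_lt_of_pos _ hp
    have h3 : 0 ≤ (u - m - s) % p := Int.emod_nonneg _ (by omega)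
    have h4 : (u - m - s) % p < p := Int.emod_lt_of_pos _ hp
    have hd : p ∣ ((s + (u - m - s) % p) - (s + (u - s) % p - m)) := by
      have d1 := hdvd u
      have d2 := hdvd (u - m)
      have e : (s + (u - m - s) % p) - (s + (u - s) % p - m)
          = (s + (u - m - s) % p - (u - m)) - (s + (u - s) % p - u) := by ring
      rw [e]
      exact dvd_sub d2 d1
    obtain ⟨c, hc⟩ := hd
    have hc0 : 0 ≤ c := by
      by_contra hneg
      push_neg at hneg
      have h5 : p * c ≤ p * (-1) := mul_le_mul_of_nonneg_left (by omega) hp.le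
      have h6 : p * (-1) = -p := by ring
      linarith
    have := chain c.toNat (s + (u - s) % p - m) (by omega)
      (by rw [Int.toNat_of_nonneg hc0]; linarith)
    rw [Int.toNat_of_nonneg hc0] at this
    rw [show s + (u - s) % p - m + c * p = s + (u - m - s) % p from by linarith] at this
    exact this
  -- division uniqueness helper
  have divmod : ∀ a q r : ℤ, 0 ≤ r → r < n → a = n * q + r → a / n = q ∧ a % n = r := by
    intro a q r h0 h1 h2
    subst h2
    constructor
    · rw [add_comm, Int.add_mul_ediv_left r q hn0, Int.ediv_eq_zero_of_lt h0 h1, zero_add]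
    · rw [add_comm, Int.add_mul_emod_self_left, Int.emod_eq_of_lt h0 h1]
  -- the periodic configuration
  set y : ℤ × ℤ → A := fun v => x (s + (v.1 - m * (v.2 / n) - s) % p, v.2 % n) with hy
  have hyij : ∀ i j : ℤ, y (i, j) = x (s + (i - m * (j / n) - s) % p, j % n) := fun i j => rfl
  have hrel : ∀ i j : ℤ, H (y (i, j)) (y (i + 1, j)) ∧ V (y (i, j)) (y (i, j + 1)) := by
    intro i j
    have hr0 : 0 ≤ j % n := Int.emod_nonneg _ hn0
    have hr1 : j % n < n := Int.emod_lt_of_pos _ hn'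
    have hj : n * (j / n) + j % n = j := Int.mul_ediv_add_emod j n
    have he0 : 0 ≤ (i - m * (j / n) - s) % p := Int.emod_nonneg _ (by omega)
    have he1 : (i - m * (j / n) - s) % p < p := Int.emod_lt_of_pos _ hp
    constructor
    · rw [hyij, hyij]
      have h1 : (i + 1 - m * (j / n) - s) % p = ((i - m * (j / n) - s) % p + 1) % p := by
        rw [show i + 1 - m * (j / n) - s = (i - m * (j / n) - s) + 1 from by ring,
            Int.emod_add_emod]
      rcases eq_or_lt_of_le (show (i - m * (j / n) - s) % p + 1 ≤ p from by omega)
        with hcase | hcase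
      · -- wrap-around in horizontal direction
        rw [h1, hcase, Int.emod_self, add_zero]
        rw [key s (j % n) (by omega) le_rfl hr0 hr1]
        have hre := (hx (s + (i - m * (j / n) - s) % p) (j % n)).1
        rw [show s + (i - m * (j / n) - s) % p + 1 = s + p from by linarith] at hre
        exact hre
      · rw [h1, Int.emod_eq_of_lt (by omega) hcase]
        have hre := (hx (s + (i - m * (j / n) - s) % p) (j % n)).1
        rw [show s + (i - m * (j / n) - s) % p + 1 = s + ((i - m * (j / n) - s) % p + 1)
            from by ring] at hre
        exact hre
    · rw [hyij, hyij]
      rcases eq_or_lt_of_le (show j % n + 1 ≤ n from by omega) with hcase | hcase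
      · -- wrap-around in vertical direction
        obtain ⟨hdiv, hmod⟩ := divmod (j + 1) (j / n + 1) 0 le_rfl hn'
          (by rw [mul_add, mul_one]; linarith)
        rw [hdiv, hmod]
        have hVx := (hx (s + (i - m * (j / n) - s) % p) (j % n)).2
        rw [hcase] at hVx
        have hper1 : x (s + (i - m * (j / n) - s) % p, n)
            = x (s + (i - m * (j / n) - s) % p - m, 0) := by
          have hh := hperk 1 (s + (i - m * (j / n) - s) % p - m) 0
          rw [show s + (i - m * (j / n) - s) % p - m + 1 * m
              = s + (i - m * (j / n) - s) % p from by ring,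
              show (0 : ℤ) + 1 * n = n from by ring] at hh
          exact hh
        rw [hper1] at hVx
        have hw := wrap (i - m * (j / n))
        rw [hw] at hVx
        rw [show i - m * (j / n + 1) - s = i - m * (j / n) - m - s from by ring]
        exact hVx
      · obtain ⟨hdiv, hmod⟩ := divmod (j + 1) (j / n) (j % n + 1) (by omega) hcase
          (by linarith)
        rw [hdiv, hmod]
        exact (hx (s + (i - m * (j / n) - s) % p) (j % n)).2
  refine ⟨y, hrel, p, by omega, ?_, n * p, by nlinarith, ?_⟩
  · intro i j
    rw [hyij, hyij]
    rw [show i + p - m * (j / n) - s = (i - m * (j / n) - s) + p * 1 from by ring,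
        Int.add_mul_emod_self_left]
  · intro i j
    rw [hyij, hyij]
    have hr0 : 0 ≤ j % n := Int.emod_nonneg _ hn0
    have hr1 : j % n < n := Int.emod_lt_of_pos _ hn'
    have hj : n * (j / n) + j % n = j := Int.mul_ediv_add_emod j n
    obtain ⟨hdiv, hmod⟩ := divmod (j + n * p) (j / n + p) (j % n) hr0 hr1
      (by rw [mul_add]; linarith)
    rw [hdiv, hmod]
    rw [show i - m * (j / n + p) - s = (i - m * (j / n) - s) + p * (-m) from by ring,
        Int.add_mul_emod_self_left]

private lemma aux2 {A : Type} [Fintype A] (H V : A → A → Prop)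
    (x : ℤ × ℤ → A)
    (hx : ∀ i j : ℤ, H (x (i, j)) (x (i + 1, j)) ∧ V (x (i, j)) (x (i, j + 1)))
    (m n : ℤ) (hm : m ≠ 0) (hn : 1 ≤ n)
    (hper : ∀ v : ℤ × ℤ, x (v + (m, n)) = x v) :
    ∃ y : ℤ × ℤ → A,
      (∀ i j : ℤ, H (y (i, j)) (y (i + 1, j)) ∧ V (y (i, j)) (y (i, j + 1))) ∧
      ∃ k1 : ℤ, 1 ≤ k1 ∧ (∀ i j : ℤ, y (i + k1, j) = y (i, j)) ∧
      ∃ k2 : ℤ, 1 ≤ k2 ∧ (∀ i j : ℤ, y (i, j + k2) = y (i, j)) := by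
  rcases lt_or_gt_of_ne hm with hneg | hpos
  · -- m < 0 : flip the horizontal axis
    set x' : ℤ × ℤ → A := fun v => x (-v.1, v.2) with hx'
    have hx'ij : ∀ i j : ℤ, x' (i, j) = x (-i, j) := fun i j => rfl
    have hrel' : ∀ i j : ℤ, (fun a b => H b a) (x' (i, j)) (x' (i + 1, j)) ∧
        V (x' (i, j)) (x' (i, j + 1)) := by
      intro i j
      constructor
      · show H (x' (i + 1, j)) (x' (i, j))
        rw [hx'ij, hx'ij]
        have := (hx (-i - 1) j).1
        rw [show -i - 1 + 1 = -i from by ring] at this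
        rw [show -(i + 1) = -i - 1 from by ring]
        exact this
      · rw [hx'ij, hx'ij]
        exact (hx (-i) j).2
    have hper' : ∀ v : ℤ × ℤ, x' (v + (-m, n)) = x' v := by
      intro v
      show x (-(v.1 + -m), v.2 + n) = x (-v.1, v.2)
      have := hper (-v.1, v.2)
      rw [show ((-v.1, v.2) : ℤ × ℤ) + (m, n) = (-(v.1 + -m), v.2 + n) from by
        rw [Prod.mk.injEq]; constructor <;> simp <;> try ring] at this
      exact this
    obtain ⟨y', hyrel, k1, hk1, hk1per, k2, hk2, hk2per⟩ :=
      aux1 (fun a b => H b a) V x' hrel' (-m) n (by omega) hn hper'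
    refine ⟨fun v => y' (-v.1, v.2), ?_, k1, hk1, ?_, k2, hk2, ?_⟩
    · intro i j
      constructor
      · show H (y' (-i, j)) (y' (-(i + 1), j))
        have := (hyrel (-i - 1) j).1
        rw [show -i - 1 + 1 = -i from by ring] at this
        rw [show -(i + 1) = -i - 1 from by ring]
        exact this
      · exact (hyrel (-i) j).2
    · intro i j
      show y' (-(i + k1), j) = y' (-i, j)
      have := hk1per (-i - k1) j
      rw [show -i - k1 + k1 = -i from by ring] at this
      rw [show -(i + k1) = -i - k1 from by ring]
      exact this.symm
    · intro i j
      exact hk2per (-i) j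
  · exact aux1 H V x hx m n (by omega) hn hper

/-- If a one-step two-dimensional SFT `X_{(H,V)}` contains a configuration with
period vector `(m, n)`, `m ≠ 0 ≠ n`, then it contains a horizontally periodic
configuration and a vertically periodic configuration. -/
theorem stmt_6 (A : Type) [Fintype A]
    (H V : A → A → Prop)
    (X : Set (ℤ × ℤ → A))
    (hX : X = {x | ∀ i j : ℤ, H (x (i, j)) (x (i + 1, j)) ∧ V (x (i, j)) (x (i, j + 1))})
    (x : ℤ × ℤ → A) (hx : x ∈ X)
    (m n : ℤ) (hm : m ≠ 0) (hn : n ≠ 0)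
    (hper : ∀ v : ℤ × ℤ, x (v + (m, n)) = x v) :
    (∃ y ∈ X, ∃ k : ℤ, 1 ≤ k ∧ ∀ i j : ℤ, y (i + k, j) = y (i, j)) ∧
    (∃ z ∈ X, ∃ k : ℤ, 1 ≤ k ∧ ∀ i j : ℤ, z (i, j + k) = z (i, j)) := by
  subst hX
  simp only [Set.mem_setOf_eq] at hx ⊢
  have main : ∃ y : ℤ × ℤ → A,
      (∀ i j : ℤ, H (y (i, j)) (y (i + 1, j)) ∧ V (y (i, j)) (y (i, j + 1))) ∧
      ∃ k1 : ℤ, 1 ≤ k1 ∧ (∀ i j : ℤ, y (i + k1, j) = y (i, j)) ∧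
      ∃ k2 : ℤ, 1 ≤ k2 ∧ (∀ i j : ℤ, y (i, j + k2) = y (i, j)) := by
    rcases lt_or_gt_of_ne hn with hneg | hpos
    · have hper' : ∀ v : ℤ × ℤ, x (v + (-m, -n)) = x v := by
        intro v
        have := hper (v + (-m, -n))
        rw [show v + (-m, -n) + (m, n) = v from by
          rw [Prod.ext_iff]; constructor; simp; simp] at this
        exact this.symm
      exact aux2 H V x hx (-m) (-n) (by omega) (by omega) hper'
    · exact aux2 H V x hx m n hm (by omega) hper
  obtain ⟨y, hyrel, k1, hk1, hk1per, k2, hk2, hk2per⟩ := main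
  exact ⟨⟨y, hyrel, k1, hk1, hk1per⟩, ⟨y, hyrel, k2, hk2, hk2per⟩⟩
end

section
/- Let A be finite and H, V relations on A with corresponding 0-1 matrices. Suppose every row and column of H and V is nonzero (every symbol has H- and V-predecessors and successors), and suppose that for all a, b ∈ A: (∃ c, H a c ∧ V c b) ↔ (∃ d, V a d ∧ H d b). Then the two-dimensional SFT X_{(H,V)} is nonempty. -/
/-- Bi-infinite chain lemma: from step-up and step-down functions compatible
with a relation, get a `ℤ`-indexed chain. -/
private lemma zchain {T : Type*} (Rel : T → T → Prop) (u d : T → T)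
    (hu : ∀ t, Rel t (u t)) (hd : ∀ t, Rel (d t) t) (t0 : T) :
    ∃ q : ℤ → T, ∀ k : ℤ, Rel (q k) (q (k + 1)) := by
  classical
  refine ⟨fun k => if 0 ≤ k then u^[k.toNat] t0 else d^[(-k).toNat] t0, fun k => ?_⟩
  rcases le_or_gt 0 k with hk | hk
  · have h1 : (0:ℤ) ≤ k + 1 := by omega
    simp only [hk, h1, if_pos]
    have h2 : (k + 1).toNat = k.toNat + 1 := by omega
    rw [h2, Function.iterate_succ_apply']
    exact hu _
  · rcases eq_or_lt_of_le (show k ≤ -1 by omega) with he | hlt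
    · subst he
      norm_num
      exact hd t0
    · have h0 : ¬ (0:ℤ) ≤ k := by omega
      have h1 : ¬ (0:ℤ) ≤ k + 1 := by omega
      simp only [h0, h1, if_neg, not_false_iff]
      have h2 : (-k).toNat = (-(k+1)).toNat + 1 := by omega
      rw [h2, Function.iterate_succ_apply']
      exact hd _

/-- If every symbol has `H`- and `V`-successors and predecessors, and
`(HV)_{ab} ≠ 0 ↔ (VH)_{ab} ≠ 0` for all `a, b` (every L-shaped corner of one
orientation can be completed to a 2×2 square), then the SFT `X_{(H,V)}` is
nonempty. -/
theorem stmt_10 (A : Type) [Fintype A] [Nonempty A]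
    (H V : A → A → Prop)
    (hHsucc : ∀ a : A, ∃ b, H a b) (hHpred : ∀ a : A, ∃ b, H b a)
    (hVsucc : ∀ a : A, ∃ b, V a b) (hVpred : ∀ a : A, ∃ b, V b a)
    (hcorner : ∀ a b : A, (∃ c, H a c ∧ V c b) ↔ (∃ d, V a d ∧ H d b))
    (X : Set (ℤ × ℤ → A))
    (hX : X = {x | ∀ i j : ℤ,
        H (x (i, j)) (x (i + 1, j)) ∧ V (x (i, j)) (x (i, j + 1))}) :
    X.Nonempty := by
  classical
  subst hX
  -- Step 1: build a bi-infinite alternating (V then H) path, giving a base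
  -- pair of adjacent diagonals.
  let a0 : A := Classical.arbitrary A
  let t0 : {q : A × A // V q.2 q.1} :=
    ⟨(Classical.choose (hVsucc a0), a0), Classical.choose_spec (hVsucc a0)⟩
  let uT : {q : A × A // V q.2 q.1} → {q : A × A // V q.2 q.1} := fun t =>
    ⟨(Classical.choose (hVsucc (Classical.choose (hHsucc t.1.1))),
      Classical.choose (hHsucc t.1.1)),
      Classical.choose_spec (hVsucc (Classical.choose (hHsucc t.1.1)))⟩
  let dT : {q : A × A // V q.2 q.1} → {q : A × A // V q.2 q.1} := fun t =>
    ⟨(Classical.choose (hHpred t.1.2),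
      Classical.choose (hVpred (Classical.choose (hHpred t.1.2)))),
      Classical.choose_spec (hVpred (Classical.choose (hHpred t.1.2)))⟩
  obtain ⟨p, hp⟩ := zchain (fun t t' : {q : A × A // V q.2 q.1} => H t.1.1 t'.1.2)
    uT dT
    (fun t => Classical.choose_spec (hHsucc t.1.1))
    (fun t => Classical.choose_spec (hHpred t.1.2)) t0
  -- Step 2: the type of pairs of adjacent diagonals, with up/down extension.
  let s0 : {s : (ℤ → A) × (ℤ → A) //
      ∀ n : ℤ, V (s.2 n) (s.1 n) ∧ H (s.1 n) (s.2 (n + 1))} :=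
    ⟨(fun n => (p n).1.1, fun n => (p n).1.2), fun n => ⟨(p n).2, hp n⟩⟩
  have cex : ∀ (s : {s : (ℤ → A) × (ℤ → A) //
        ∀ n : ℤ, V (s.2 n) (s.1 n) ∧ H (s.1 n) (s.2 (n + 1))}) (n : ℤ),
      ∃ c, H (s.1.2 n) c ∧ V c (s.1.2 (n + 1)) :=
    fun s n => (hcorner _ _).2 ⟨s.1.1 n, (s.2 n).1, (s.2 n).2⟩
  have dex : ∀ (s : {s : (ℤ → A) × (ℤ → A) //
        ∀ n : ℤ, V (s.2 n) (s.1 n) ∧ H (s.1 n) (s.2 (n + 1))}) (n : ℤ),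
      ∃ c, V (s.1.1 n) c ∧ H c (s.1.1 (n + 1)) :=
    fun s n => (hcorner _ _).1 ⟨s.1.2 (n + 1), (s.2 n).2, (s.2 (n + 1)).1⟩
  choose fc hc1 hc2 using cex
  choose fd hd1 hd2 using dex
  let uS : {s : (ℤ → A) × (ℤ → A) //
        ∀ n : ℤ, V (s.2 n) (s.1 n) ∧ H (s.1 n) (s.2 (n + 1))} →
      {s : (ℤ → A) × (ℤ → A) //
        ∀ n : ℤ, V (s.2 n) (s.1 n) ∧ H (s.1 n) (s.2 (n + 1))} := fun s =>
    ⟨(s.1.2, fun m => fc s (m - 1)), by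
      intro n
      constructor
      · have h := hc2 s (n - 1)
        rw [show (n:ℤ) - 1 + 1 = n from by ring] at h
        exact h
      · show H (s.1.2 n) (fc s (n + 1 - 1))
        rw [show (n:ℤ) + 1 - 1 = n from by ring]
        exact hc1 s n⟩
  let dS : {s : (ℤ → A) × (ℤ → A) //
        ∀ n : ℤ, V (s.2 n) (s.1 n) ∧ H (s.1 n) (s.2 (n + 1))} →
      {s : (ℤ → A) × (ℤ → A) //
        ∀ n : ℤ, V (s.2 n) (s.1 n) ∧ H (s.1 n) (s.2 (n + 1))} := fun s =>
    ⟨(fun n => fd s n, s.1.1), fun n => ⟨hd1 s n, hd2 s n⟩⟩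
  obtain ⟨F, hF⟩ := zchain (fun s s' : {s : (ℤ → A) × (ℤ → A) //
        ∀ n : ℤ, V (s.2 n) (s.1 n) ∧ H (s.1 n) (s.2 (n + 1))} => s.1.2 = s'.1.1)
    uS dS (fun s => rfl) (fun s => rfl) s0
  -- Step 3: assemble the configuration.
  refine ⟨fun q => (F (q.1 - q.2)).1.1 q.1, fun i j => ⟨?_, ?_⟩⟩
  · -- horizontal
    have h := ((F (i - j)).2 i).2
    rw [hF (i - j)] at h
    have he : i + 1 - j = i - j + 1 := by ring
    show H ((F (i - j)).1.1 i) ((F (i + 1 - j)).1.1 (i + 1))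
    rw [he]
    exact h
  · -- vertical
    have h := ((F (i - (j + 1))).2 i).1
    rw [hF (i - (j + 1))] at h
    have he : i - (j + 1) + 1 = i - j := by ring
    rw [he] at h
    exact h
end

section
/- Let A be finite, and H, V relations on A with all rows and columns nonzero. If for all a,b ∈ A, (∃ c, H a c ∧ V c b) ↔ (∃ d, V a d ∧ H d b), then X_{(H,V)} contains periodic points of arbitrarily large periods: for every m ∈ ℕ there exists x ∈ X_{(H,V)} and a nonzero period vector u of x with ‖u‖ ≥ m. -/
lemma cycle_lemma {B : Type} [Finite B] (R : B → B → Prop) (S : Set B) (f0 : B)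
    (hf0 : f0 ∈ S) (hstep : ∀ f ∈ S, ∃ g, g ∈ S ∧ R f g) :
    ∃ L : ℕ, 0 < L ∧ ∃ s : ZMod L → B, ∀ z : ZMod L, R (s z) (s (z + 1)) := by
  classical
  have hG : ∀ f : B, ∃ g : B, f ∈ S → (g ∈ S ∧ R f g) := by
    intro f
    by_cases h : f ∈ S
    · obtain ⟨g, hg⟩ := hstep f h
      exact ⟨g, fun _ => hg⟩
    · exact ⟨f0, fun h' => absurd h' h⟩
  choose G hGspec using hG
  set u : ℕ → B := fun k => G^[k] f0 with hu_def
  have hmem : ∀ k, u k ∈ S := by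
    intro k
    induction k with
    | zero => simpa [hu_def] using hf0
    | succ k ih =>
      have : u (k + 1) = G (u k) := by
        simp [hu_def, Function.iterate_succ_apply']
      rw [this]
      exact (hGspec (u k) ih).1
  have hR : ∀ k, R (u k) (u (k + 1)) := by
    intro k
    have : u (k + 1) = G (u k) := by
      simp [hu_def, Function.iterate_succ_apply']
    rw [this]
    exact (hGspec (u k) (hmem k)).2
  obtain ⟨x, y, hxy, hexy⟩ := Finite.exists_ne_map_eq_of_infinite u
  -- wlog i < j
  obtain ⟨i, j, hij, huij⟩ : ∃ i j : ℕ, i < j ∧ u i = u j := by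
    rcases lt_or_gt_of_ne hxy with h | h
    · exact ⟨x, y, h, hexy⟩
    · exact ⟨y, x, h, hexy.symm⟩
  set L : ℕ := j - i with hL_def
  have hLpos : 0 < L := Nat.sub_pos_of_lt hij
  haveI : NeZero L := ⟨hLpos.ne'⟩
  have hiL : i + L = j := by omega
  have hadd : ∀ a b : ℕ, u (b + a) = G^[b] (u a) := by
    intro a b
    simp [hu_def, Function.iterate_add_apply]
  have hper : ∀ t : ℕ, u (i + t + L) = u (i + t) := by
    intro t
    have h1 : u (i + t + L) = G^[t] (u (i + L)) := by
      rw [show i + t + L = t + (i + L) by ring, hadd]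
    have h2 : u (i + t) = G^[t] (u i) := by
      rw [show i + t = t + i by ring, hadd]
    rw [h1, h2, hiL, ← huij]
  have hmod : ∀ t : ℕ, u (i + t % L) = u (i + t) := by
    intro t
    induction t using Nat.strong_induction_on with
    | _ t ih =>
      by_cases h : t < L
      · rw [Nat.mod_eq_of_lt h]
      · push_neg at h
        have h1 : t % L = (t - L) % L := (Nat.mod_eq_sub_mod h).symm ▸ rfl
        have h2 : u (i + t) = u (i + (t - L)) := by
          have : i + t = i + (t - L) + L := by omega
          rw [this, hper]
        rw [Nat.mod_eq_sub_mod h, ih (t - L) (by omega), h2]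
  refine ⟨L, hLpos, fun z => u (i + z.val), fun z => ?_⟩
  have hval : (z + 1).val = (z.val + 1) % L := by
    rw [ZMod.val_add, ZMod.val_one_eq_one_mod]
    conv_rhs => rw [Nat.add_mod]
    rw [Nat.mod_eq_of_lt (ZMod.val_lt z)]
  have : u (i + (z + 1).val) = u ((i + z.val) + 1) := by
    rw [hval, hmod (z.val + 1), Nat.add_assoc]
  show R (u (i + z.val)) (u (i + (z + 1).val))
  rw [this]
  exact hR (i + z.val)

/-- Under the matrix condition `(HV)_{ab} ≠ 0 ↔ (VH)_{ab} ≠ 0` (with all rows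
and columns of `H` and `V` nonzero), the SFT `X_{(H,V)}` possesses periodic
points of arbitrarily large periods. -/
theorem stmt_12 (A : Type) [Fintype A] [Nonempty A]
    (H V : A → A → Prop)
    (hHsucc : ∀ a : A, ∃ b, H a b) (hHpred : ∀ a : A, ∃ b, H b a)
    (hVsucc : ∀ a : A, ∃ b, V a b) (hVpred : ∀ a : A, ∃ b, V b a)
    (hcorner : ∀ a b : A, (∃ c, H a c ∧ V c b) ↔ (∃ d, V a d ∧ H d b))
    (X : Set (ℤ × ℤ → A))
    (hX : X = {x | ∀ i j : ℤ,
        H (x (i, j)) (x (i + 1, j)) ∧ V (x (i, j)) (x (i, j + 1))}) :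
    ∀ m : ℕ, ∃ x ∈ X, ∃ u : ℤ × ℤ, u ≠ 0 ∧
      (∀ p : ℤ × ℤ, x (p + u) = x p) ∧ m ≤ u.1.natAbs + u.2.natAbs := by
  classical
  intro m
  -- the diagonal relation D = H ∘ V
  set D : A → A → Prop := fun a b => ∃ c, H a c ∧ V c b with hD_def
  have hDstep : ∀ a : A, a ∈ (Set.univ : Set A) → ∃ b, b ∈ (Set.univ : Set A) ∧ D a b := by
    intro a _
    obtain ⟨c, hc⟩ := hHsucc a
    obtain ⟨b, hb⟩ := hVsucc c
    exact ⟨b, trivial, c, hc, hb⟩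
  obtain ⟨n, hn, e, he⟩ :=
    cycle_lemma D Set.univ (Classical.arbitrary A) trivial hDstep
  haveI : NeZero n := ⟨hn.ne'⟩
  -- rings and the relation between consecutive diagonals
  set R' : (ZMod n → A) → (ZMod n → A) → Prop :=
    fun f g => ∀ z : ZMod n, H (f z) (g (z + 1)) ∧ V (g z) (f z) with hR'_def
  set S : Set (ZMod n → A) := {f | ∃ e', R' e' f} with hS_def
  -- seed ring from the D-cycle
  have hseed : ∃ f0 : ZMod n → A, f0 ∈ S := by
    have hcw : ∀ z : ZMod n, ∃ c, H (e z) c ∧ V c (e (z + 1)) := fun z => he z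
    choose c hc1 hc2 using hcw
    refine ⟨fun z => c (z - 1), e, fun z => ⟨?_, ?_⟩⟩
    · simpa using hc1 z
    · simpa using hc2 (z - 1)
  obtain ⟨f0, hf0⟩ := hseed
  -- every ring that sits above another ring has a ring above it
  have hstep : ∀ f ∈ S, ∃ g, g ∈ S ∧ R' f g := by
    rintro f ⟨e', he'⟩
    have hcw : ∀ z : ZMod n, ∃ w, H (f z) w ∧ V w (f (z + 1)) := by
      intro z
      exact (hcorner (f z) (f (z + 1))).2 ⟨e' z, (he' z).2, (he' z).1⟩
    choose w hw1 hw2 using hcw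
    refine ⟨fun z => w (z - 1), ⟨f, fun z => ⟨?_, ?_⟩⟩, fun z => ⟨?_, ?_⟩⟩
    · simpa using hw1 z
    · simpa using hw2 (z - 1)
    · simpa using hw1 z
    · simpa using hw2 (z - 1)
  obtain ⟨L, hL, s, hs⟩ := cycle_lemma R' S f0 hf0 hstep
  -- the configuration
  set x : ℤ × ℤ → A :=
    fun p => s (((p.1 - p.2 : ℤ) : ZMod L)) (((p.1 : ℤ) : ZMod n)) with hx_def
  have hxX : x ∈ X := by
    rw [hX]
    intro i j
    constructor
    · have := (hs (((i - j : ℤ) : ZMod L)) (((i : ℤ) : ZMod n))).1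
      simp only [hx_def]
      convert this using 3 <;> push_cast <;> ring
    · have := (hs ((((i - j : ℤ) - 1 : ℤ) : ZMod L)) (((i : ℤ) : ZMod n))).2
      simp only [hx_def]
      convert this using 3 <;> push_cast <;> ring
  refine ⟨x, hxX, ((n : ℤ) * (m + 1), (n : ℤ) * (m + 1)), ?_, ?_, ?_⟩
  · intro h
    have h1 : (n : ℤ) * (m + 1) = 0 := congrArg Prod.fst h
    have : (n : ℤ) ≠ 0 := by exact_mod_cast hn.ne'
    nlinarith [this.lt_or_gt]
  · intro p
    simp only [hx_def, Prod.fst_add, Prod.snd_add]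
    congr 1
    · push_cast; ring_nf
    · push_cast [ZMod.natCast_self]; ring_nf
  · simp only [Int.natAbs_mul]
    have h1 : ((n : ℤ)).natAbs = n := Int.natAbs_natCast n
    have h2 : ((m : ℤ) + 1).natAbs = m + 1 := by
      rw [show ((m : ℤ) + 1) = ((m + 1 : ℕ) : ℤ) by push_cast; ring, Int.natAbs_natCast]
    rw [h1, h2]
    nlinarith [hn]
end

section
/- Let A be finite with relations H, V on A, and suppose each element of A has at least one H-successor, H-predecessor, V-successor and V-predecessor. If for all a, b ∈ A, (∃ c, H a c ∧ V c b) → (∃ d, V a d ∧ H d b), then for every r, s ≥ 1, every allowed 1×r horizontal strip (word w of length r with H (w_i) (w_{i+1})) extends to an allowed s×r rectangle, i.e., a pattern p : [0, r−1]×[0, s−1] → A with bottom row w satisfying all H and V adjacencies. -/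
/-- One-row extension: any allowed horizontal strip has an allowed strip above it. -/
lemma stmt_18_step (A : Type) (H V : A → A → Prop)
    (hVsucc : ∀ a : A, ∃ b, V a b)
    (hcorner : ∀ a b : A, (∃ c, H a c ∧ V c b) → (∃ d, V a d ∧ H d b)) :
    ∀ (m : ℕ) (w : Fin (m + 1) → A),
      (∀ (i : ℕ) (hi : i + 1 < m + 1), H (w ⟨i, by omega⟩) (w ⟨i + 1, hi⟩)) →
      ∃ w' : Fin (m + 1) → A,
        (∀ (i : ℕ) (hi : i + 1 < m + 1), H (w' ⟨i, by omega⟩) (w' ⟨i + 1, hi⟩)) ∧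
        (∀ i, V (w i) (w' i)) := by
  intro m
  induction m with
  | zero =>
    intro w hw
    obtain ⟨b, hb⟩ := hVsucc (w ⟨0, by omega⟩)
    refine ⟨fun _ => b, ?_, ?_⟩
    · intro i hi; omega
    · intro i
      have : i = ⟨0, by omega⟩ := Fin.ext (by omega)
      rw [this]; exact hb
  | succ m ih =>
    intro w hw
    set u : Fin (m + 1) → A := fun i => w ⟨i.val + 1, by omega⟩ with hu
    have hu_chain : ∀ (i : ℕ) (hi : i + 1 < m + 1),
        H (u ⟨i, by omega⟩) (u ⟨i + 1, hi⟩) := by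
      intro i hi
      exact hw (i + 1) (by omega)
    obtain ⟨u', hu'chain, hu'V⟩ := ih u hu_chain
    obtain ⟨d, hd1, hd2⟩ := hcorner (w ⟨0, by omega⟩) (u' ⟨0, by omega⟩)
      ⟨u ⟨0, by omega⟩, hw 0 (by omega), hu'V ⟨0, by omega⟩⟩
    refine ⟨fun j => if h : j.val = 0 then d else u' ⟨j.val - 1, by omega⟩, ?_, ?_⟩
    · intro i hi
      dsimp only
      by_cases h0 : i = 0
      · subst h0
        rw [dif_pos rfl, dif_neg (by omega : ¬ (0 + 1 : ℕ) = 0)]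
        exact hd2
      · rw [dif_neg (by simpa using h0 : ¬ ((⟨i, by omega⟩ : Fin (m + 2)) : ℕ) = 0),
          dif_neg (by simp : ¬ ((⟨i + 1, hi⟩ : Fin (m + 2)) : ℕ) = 0)]
        have := hu'chain (i - 1) (by omega)
        convert this using 3 <;> simp <;> omega
    · intro i
      dsimp only
      by_cases h0 : i.val = 0
      · rw [dif_pos h0]
        have : i = ⟨0, by omega⟩ := Fin.ext h0
        rw [this]; exact hd1
      · rw [dif_neg h0]
        have hi : i = ⟨(i.val - 1) + 1, by omega⟩ := Fin.ext (by simp; omega)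
        rw [hi]
        exact hu'V ⟨i.val - 1, by omega⟩

lemma stmt_18_rect (A : Type) (H V : A → A → Prop)
    (hVsucc : ∀ a : A, ∃ b, V a b)
    (hcorner : ∀ a b : A, (∃ c, H a c ∧ V c b) → (∃ d, V a d ∧ H d b)) :
    ∀ (t m : ℕ) (w : Fin (m + 1) → A),
      (∀ (i : ℕ) (hi : i + 1 < m + 1), H (w ⟨i, by omega⟩) (w ⟨i + 1, hi⟩)) →
      ∃ p : Fin (m + 1) → Fin (t + 1) → A,
        (∀ i : Fin (m + 1), p i ⟨0, by omega⟩ = w i) ∧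
        (∀ (i : ℕ) (hi : i + 1 < m + 1) (j : Fin (t + 1)),
          H (p ⟨i, by omega⟩ j) (p ⟨i + 1, hi⟩ j)) ∧
        (∀ (i : Fin (m + 1)) (j : ℕ) (hj : j + 1 < t + 1),
          V (p i ⟨j, by omega⟩) (p i ⟨j + 1, hj⟩)) := by
  intro t
  induction t with
  | zero =>
    intro m w hw
    refine ⟨fun i _ => w i, fun i => rfl, ?_, ?_⟩
    · intro i hi j; exact hw i hi
    · intro i j hj; omega
  | succ t ih =>
    intro m w hw
    obtain ⟨p, hbot, hH, hV⟩ := ih m w hw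
    set top : Fin (m + 1) → A := fun i => p i ⟨t, by omega⟩ with htop
    have htop_chain : ∀ (i : ℕ) (hi : i + 1 < m + 1),
        H (top ⟨i, by omega⟩) (top ⟨i + 1, hi⟩) := by
      intro i hi
      exact hH i hi ⟨t, by omega⟩
    obtain ⟨w', hw'chain, hw'V⟩ := stmt_18_step A H V hVsucc hcorner m top htop_chain
    refine ⟨fun i j => if h : j.val < t + 1 then p i ⟨j.val, h⟩ else w' i, ?_, ?_, ?_⟩
    · intro i
      dsimp only
      rw [dif_pos (show (0 : ℕ) < t + 1 by omega)]
      exact hbot i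
    · intro i hi j
      dsimp only
      by_cases h : j.val < t + 1
      · rw [dif_pos h, dif_pos h]
        exact hH i hi ⟨j.val, h⟩
      · rw [dif_neg h, dif_neg h]
        exact hw'chain i hi
    · intro i j hj
      dsimp only
      by_cases h : j + 1 < t + 1
      · rw [dif_pos (show j < t + 1 by omega), dif_pos (show j + 1 < t + 1 from h)]
        exact hV i j h
      · have hjt : j = t := by omega
        rw [dif_pos (show j < t + 1 by omega), dif_neg (show ¬ j + 1 < t + 1 from h)]
        convert hw'V i using 2
        exact Fin.ext (by simp [hjt])

/-- If every symbol has `H`- and `V`-successors and predecessors and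
`(HV)_{ab} ≠ 0 → (VH)_{ab} ≠ 0`, then every allowed horizontal strip of length
`r` extends to an allowed `s × r` rectangle with the given strip as bottom
row, for every `s ≥ 1`. -/
theorem stmt_18 (A : Type) [Fintype A]
    (H V : A → A → Prop)
    (hHsucc : ∀ a : A, ∃ b, H a b) (hHpred : ∀ a : A, ∃ b, H b a)
    (hVsucc : ∀ a : A, ∃ b, V a b) (hVpred : ∀ a : A, ∃ b, V b a)
    (hcorner : ∀ a b : A, (∃ c, H a c ∧ V c b) → (∃ d, V a d ∧ H d b)) :
    ∀ (r s : ℕ), ∀ _hr : 1 ≤ r, ∀ hs : 1 ≤ s,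
      ∀ w : Fin r → A,
        (∀ (i : ℕ) (hi : i + 1 < r), H (w ⟨i, by omega⟩) (w ⟨i + 1, hi⟩)) →
        ∃ p : Fin r → Fin s → A,
          (∀ i : Fin r, p i ⟨0, by omega⟩ = w i) ∧
          (∀ (i : ℕ) (hi : i + 1 < r) (j : Fin s),
            H (p ⟨i, by omega⟩ j) (p ⟨i + 1, hi⟩ j)) ∧
          (∀ (i : Fin r) (j : ℕ) (hj : j + 1 < s),
            V (p i ⟨j, by omega⟩) (p i ⟨j + 1, hj⟩)) := by
  intro r s hr hs w hw
  obtain ⟨m, rfl⟩ : ∃ m, r = m + 1 := ⟨r - 1, by omega⟩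
  obtain ⟨t, rfl⟩ : ∃ t, s = t + 1 := ⟨s - 1, by omega⟩
  exact stmt_18_rect A H V hVsucc hcorner t m w hw
end
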